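/- The presented group with generators d, f, g, i, j, l and relators (jg)(gd)⁻¹, (lf)j⁻¹, (id)(lif)⁻¹ is isomorphic to the presented group with generators a₁, b₁, a₂, b₂ and single relator [a₁,b₁][a₂,b₂], where [x,y] = x y x⁻¹ y⁻¹ denotes the commutator; i.e., it is isomorphic to the fundamental group of the closed orientable surface of genus 2. -/

import Mathlib

namespace Genus2PresentedGroup

open scoped commutatorElement

def d : FreeGroup (Fin 6) := FreeGroup.of 0
def f : FreeGroup (Fin 6) := FreeGroup.of 1
def g : FreeGroup (Fin 6) := FreeGroup.of 2
def i : FreeGroup (Fin 6) := FreeGroup.of 3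
def j : FreeGroup (Fin 6) := FreeGroup.of 4
def l : FreeGroup (Fin 6) := FreeGroup.of 5

def a₁ : FreeGroup (Fin 4) := FreeGroup.of 0
def b₁ : FreeGroup (Fin 4) := FreeGroup.of 1
def a₂ : FreeGroup (Fin 4) := FreeGroup.of 2
def b₂ : FreeGroup (Fin 4) := FreeGroup.of 3

/-- The relators `(jg)(gd)⁻¹`, `(lf)j⁻¹`, `(id)(lif)⁻¹`. -/
def rels₁ : Set (FreeGroup (Fin 6)) :=
  {(j * g) * (g * d)⁻¹, (l * f) * j⁻¹, (i * d) * (l * i * f)⁻¹}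

/-- The single relator `[a₁,b₁][a₂,b₂]` of the genus 2 surface group. -/
def rels₂ : Set (FreeGroup (Fin 4)) := {⁅a₁, b₁⁆ * ⁅a₂, b₂⁆}

local notation "D" => (PresentedGroup.of (rels := rels₁) 0)
local notation "F'" => (PresentedGroup.of (rels := rels₁) 1)
local notation "G'" => (PresentedGroup.of (rels := rels₁) 2)
local notation "I" => (PresentedGroup.of (rels := rels₁) 3)
local notation "J" => (PresentedGroup.of (rels := rels₁) 4)
local notation "L" => (PresentedGroup.of (rels := rels₁) 5)
local notation "A₁" => (PresentedGroup.of (rels := rels₂) 0)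
local notation "B₁" => (PresentedGroup.of (rels := rels₂) 1)
local notation "A₂" => (PresentedGroup.of (rels := rels₂) 2)
local notation "B₂" => (PresentedGroup.of (rels := rels₂) 3)

lemma rel1 : J * G' = G' * D := by
  have h : PresentedGroup.mk rels₁ ((j * g) * (g * d)⁻¹) = 1 :=
    (QuotientGroup.eq_one_iff _).2 (Subgroup.subset_normalClosure (by simp [rels₁]))
  rw [map_mul, map_inv, mul_inv_eq_one] at h
  simpa [d, g, j, PresentedGroup.of, map_mul] using h

lemma rel2 : L * F' = J := by
  have h : PresentedGroup.mk rels₁ ((l * f) * j⁻¹) = 1 :=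
    (QuotientGroup.eq_one_iff _).2 (Subgroup.subset_normalClosure (by simp [rels₁]))
  rw [map_mul, map_inv, mul_inv_eq_one] at h
  simpa [f, j, l, PresentedGroup.of, map_mul] using h

lemma rel3 : I * D = L * I * F' := by
  have h : PresentedGroup.mk rels₁ ((i * d) * (l * i * f)⁻¹) = 1 :=
    (QuotientGroup.eq_one_iff _).2 (Subgroup.subset_normalClosure (by simp [rels₁]))
  rw [map_mul, map_inv, mul_inv_eq_one] at h
  simpa [d, f, i, l, PresentedGroup.of, map_mul] using h

lemma rel4 : A₁ * B₁ * A₁⁻¹ * B₁⁻¹ * (A₂ * B₂ * A₂⁻¹ * B₂⁻¹) = 1 := by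
  have h : PresentedGroup.mk rels₂ (⁅a₁, b₁⁆ * ⁅a₂, b₂⁆) = 1 :=
    (QuotientGroup.eq_one_iff _).2 (Subgroup.subset_normalClosure (by simp [rels₂]))
  simpa [a₁, b₁, a₂, b₂, commutatorElement_def, PresentedGroup.of, map_mul, map_inv] using h

def φf : Fin 6 → PresentedGroup rels₂
  | 0 => A₂
  | 1 => B₁ * A₁⁻¹ * B₁⁻¹ * A₂
  | 2 => B₂
  | 3 => B₁⁻¹
  | 4 => B₂ * A₂ * B₂⁻¹
  | 5 => A₁

def ψf : Fin 4 → PresentedGroup rels₁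
  | 0 => L
  | 1 => I⁻¹
  | 2 => D
  | 3 => G'

lemma hφ : ∀ r ∈ rels₁, FreeGroup.lift φf r = 1 := by
  intro r hr
  rcases hr with h | h | h <;> subst h
  · simp [d, g, j, φf, map_mul, map_inv, mul_inv_rev, FreeGroup.lift_apply_of]
  · show FreeGroup.lift φf (l * f * j⁻¹) = 1
    rw [f, j, l, map_mul, map_mul, map_inv]
    simp only [FreeGroup.lift_apply_of, φf]
    rw [← rel4]
    group
  · simp [d, f, i, l, φf, map_mul, map_inv, mul_inv_rev, FreeGroup.lift_apply_of]
    group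

lemma hψ : ∀ r ∈ rels₂, FreeGroup.lift ψf r = 1 := by
  intro r hr
  rw [rels₂, Set.mem_singleton_iff] at hr
  subst hr
  simp only [a₁, b₁, a₂, b₂, commutatorElement_def, map_mul, map_inv, FreeGroup.lift_apply_of, ψf,
    inv_inv]
  have e : I * D = L * I * (L⁻¹ * (G' * D * G'⁻¹)) := by
    have h2 : F' = L⁻¹ * J := by rw [← rel2]; group
    rw [rel3, h2, ← rel1]
    group
  calc L * I⁻¹ * L⁻¹ * I * (D * (G' * (D⁻¹ * G'⁻¹)))
      = L * I⁻¹ * L⁻¹ * (I * D) * G' * D⁻¹ * G'⁻¹ := by group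
    _ = L * I⁻¹ * L⁻¹ * (L * I * (L⁻¹ * (G' * D * G'⁻¹))) * G' * D⁻¹ * G'⁻¹ := by rw [e]
    _ = 1 := by group

def φ : PresentedGroup rels₁ →* PresentedGroup rels₂ := PresentedGroup.toGroup hφ
def ψ : PresentedGroup rels₂ →* PresentedGroup rels₁ := PresentedGroup.toGroup hψ

/-- The presented group `⟨d,f,g,i,j,l ∣ (jg)(gd)⁻¹, (lf)j⁻¹, (id)(lif)⁻¹⟩` is isomorphic
to the presented group `⟨a₁,b₁,a₂,b₂ ∣ [a₁,b₁][a₂,b₂]⟩`, the fundamental group of the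
closed orientable surface of genus 2. -/
theorem presentedGroup_iso_surfaceGroup :
    Nonempty (PresentedGroup rels₁ ≃* PresentedGroup rels₂) := by
  refine ⟨MonoidHom.toMulEquiv φ ψ ?_ ?_⟩
  · ext x
    fin_cases x <;>
      simp only [MonoidHom.comp_apply, MonoidHom.id_apply, φ, ψ, PresentedGroup.toGroup.of,
        φf, ψf, map_mul, map_inv, inv_inv]
    all_goals try rfl
    · -- f : I⁻¹ * L⁻¹ * I * D = F'
      show I⁻¹ * L⁻¹ * I * D = F'
      have h2 : F' = L⁻¹ * J := by rw [← rel2]; group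
      rw [mul_assoc, rel3, h2]
      group
    · -- j : G' * D * G'⁻¹ = J
      show G' * D * G'⁻¹ = J
      rw [← rel1]; group
  · ext x
    fin_cases x <;>
      simp only [MonoidHom.comp_apply, MonoidHom.id_apply, φ, ψ, PresentedGroup.toGroup.of,
        φf, ψf, map_mul, map_inv, inv_inv] <;> rfl

end Genus2PresentedGroup
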